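/- Let A be a 2×2 Hermitian matrix of Laurent polynomials over ℂ whose entries have symmetry, with A_{1,1} and A_{2,2} having symmetry with type 1·z⁰, A_{1,2} having symmetry with type α(z) = ε₀ z^{c₀}, and A_{2,1} having symmetry with type ε₀ z^{−c₀}, where either c₀ is odd (ε₀ ∈ {1,−1} arbitrary) or ε₀ = 1 and c₀ is even. Suppose det A(z) = C identically, where C is a negative real constant. Then there exists a strongly invertible 2×2 matrix V of Laurent polynomials whose entries have symmetry, with V_{1,1} and V_{2,2} having symmetry with type 1·z⁰, V_{1,2} having symmetry with type ε₀ z^{c₀} and V_{2,1} having symmetry with type ε₀ z^{−c₀}, such that at least one entry of the matrix V(z)A(z)V⋆(z) is the zero Laurent polynomial. -/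

import Mathlib

open LaurentPolynomial Matrix
open scoped Classical

noncomputable section

abbrev LP := LaurentPolynomial ℂ

namespace QT

/-- The coefficient of `z^k` in a Laurent polynomial. -/
def coeff (u : LP) (k : ℤ) : ℂ := (AddMonoidAlgebra.coeff u) k

/-- The Hermitian conjugate `u⋆(z) = Σ conj(u(k)) z^{-k}`. -/
def hstar (u : LP) : LP :=
  AddMonoidAlgebra.ofCoeff (
    Finsupp.mapDomain (fun k => -k)
      (Finsupp.mapRange (starRingEnd ℂ) (map_zero _) (AddMonoidAlgebra.coeff u)))

/-- `u` has symmetry with type `ε z^c`, i.e. `u(k) = ε u(c-k)` for all `k`. -/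
def SymT (u : LP) (ε : ℂ) (c : ℤ) : Prop := ∀ k : ℤ, coeff u k = ε * coeff u (c - k)

def Sgn (ε : ℂ) : Prop := ε = 1 ∨ ε = -1

/-- `u` has symmetry (with some type). -/
def HasSym (u : LP) : Prop := ∃ ε c, Sgn ε ∧ SymT u ε c

/-- The Laurent polynomial `z - a`. -/
def zsub (a : ℂ) : LP := T 1 - LaurentPolynomial.C a

/-- `m` is the multiplicity of `z₀` as a zero of `u`. -/
def mzIs (u : LP) (z₀ : ℂ) (m : ℕ) : Prop := zsub z₀ ^ m ∣ u ∧ ¬ zsub z₀ ^ (m + 1) ∣ u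

/-- The multiplicity of `z₀` as a zero of `u`, as a function. -/
def mzF (u : LP) (z₀ : ℂ) : ℕ := sSup {m : ℕ | zsub z₀ ^ m ∣ u}

/-- The difference-of-(Hermitian)-squares property with respect to symmetry type `ε z^c`. -/
def DOS (u : LP) (ε : ℂ) (c : ℤ) : Prop :=
  ∃ (u₁ u₂ : LP) (ε₁ ε₂ : ℂ) (c₁ c₂ : ℤ),
    Sgn ε₁ ∧ Sgn ε₂ ∧ SymT u₁ ε₁ c₁ ∧ SymT u₂ ε₂ c₂ ∧
    u₁ * hstar u₁ - u₂ * hstar u₂ = u ∧ ε₁ * ε₂ = ε ∧ c₁ - c₂ = c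

/-- Degree: the largest exponent with nonzero coefficient (0 for the zero polynomial). -/
def degL (u : LP) : ℤ :=
  if h : u = 0 then 0
  else (AddMonoidAlgebra.coeff u).support.max'
    (Finsupp.support_nonempty_iff.mpr fun h' => h (AddMonoidAlgebra.coeff_injective h'))

/-- Lower degree: the smallest exponent with nonzero coefficient (0 for zero). -/
def ldegL (u : LP) : ℤ :=
  if h : u = 0 then 0
  else (AddMonoidAlgebra.coeff u).support.min'
    (Finsupp.support_nonempty_iff.mpr fun h' => h (AddMonoidAlgebra.coeff_injective h'))

/-- Length `deg - ldeg`, with `len 0 = ⊥`. -/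
def lenL (u : LP) : WithBot ℤ := if u = 0 then ⊥ else ((degL u - ldegL u : ℤ) : WithBot ℤ)

/-- `g` is a greatest common divisor of `a` and `b`. -/
def IsGCD2 (g a b : LP) : Prop := g ∣ a ∧ g ∣ b ∧ ∀ e : LP, e ∣ a → e ∣ b → e ∣ g

/-- `g` is a greatest common divisor of `a`, `b`, `c`, `d`. -/
def IsGCD4 (g a b c d : LP) : Prop :=
  g ∣ a ∧ g ∣ b ∧ g ∣ c ∧ g ∣ d ∧ ∀ e : LP, e ∣ a → e ∣ b → e ∣ c → e ∣ d → e ∣ g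

/-- The Hermitian conjugate transpose of a matrix of Laurent polynomials. -/
def hstarM (A : Matrix (Fin 2) (Fin 2) LP) : Matrix (Fin 2) (Fin 2) LP :=
  fun i j => hstar (A j i)

def IsHerm (A : Matrix (Fin 2) (Fin 2) LP) : Prop := hstarM A = A

/-- `diag(1, -1)`. -/
def Jmat : Matrix (Fin 2) (Fin 2) LP := Matrix.diagonal ![1, -1]

/-- A square matrix of Laurent polynomials is strongly invertible if its determinant is a
nonzero monomial. -/
def StrongInv (A : Matrix (Fin 2) (Fin 2) LP) : Prop :=
  ∃ (lam : ℂ) (k : ℤ), lam ≠ 0 ∧ A.det = LaurentPolynomial.C lam * T k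

/-- Compatible symmetry for a `2×2` matrix of Laurent polynomials. -/
def CompatSym (A : Matrix (Fin 2) (Fin 2) LP) : Prop :=
  ∃ (ε ε' : Fin 2 → ℂ) (c c' : Fin 2 → ℤ),
    (∀ j, Sgn (ε j)) ∧ (∀ k, Sgn (ε' k)) ∧
    ∀ j k, SymT (A j k) (ε j * ε' k) (c' k - c j)

/-- Substitution `z ↦ z²`. -/
def sqDom (u : LP) : LP :=
  AddMonoidAlgebra.ofCoeff (Finsupp.mapDomain (fun k => 2 * k) (AddMonoidAlgebra.coeff u))

/-- Substitution `z ↦ -z`. -/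
def negSub (u : LP) : LP :=
  (AddMonoidAlgebra.coeff u).sum fun k c =>
    (AddMonoidAlgebra.ofCoeff (Finsupp.single k ((-1 : ℂ) ^ k * c)) : LP)

/-- The `γ`-coset `u^{[γ]}(z) = Σ_k u(γ + 2k) z^k`. -/
def cosetL (u : LP) (γ : ℤ) : LP :=
  AddMonoidAlgebra.ofCoeff (
    Finsupp.comapDomain (fun k : ℤ => γ + 2 * k) (AddMonoidAlgebra.coeff u)
      (by intro a _ b _ h; simp only at h; omega))

/-- Evaluation of a Laurent polynomial at a point. -/
def evalL (u : LP) (z : ℂ) : ℂ := (AddMonoidAlgebra.coeff u).sum fun k c => c * z ^ k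

/-- `{a; b₁, b₂}_{Θ,(1,-1)}` is a quasi-tight framelet filter bank. -/
def QTFB (a Θ b₁ b₂ : LP) : Prop :=
  sqDom Θ * hstar a * a + hstar b₁ * b₁ - hstar b₂ * b₂ = Θ ∧
  sqDom Θ * hstar a * negSub a + hstar b₁ * negSub b₁ - hstar b₂ * negSub b₂ = 0

/-- The matrix `N_{a,Θ|n_b}` built from the quotients `A`, `B`. -/
def Nmat (A B : LP) : Matrix (Fin 2) (Fin 2) LP :=
  LaurentPolynomial.C (2 : ℂ)⁻¹ •
    !![cosetL A 0 + cosetL B 0, cosetL A 1 - cosetL B 1;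
       T 1 * (cosetL A 1 + cosetL B 1), cosetL A 0 - cosetL B 0]

lemma coeff_ext {u v : LP} (h : ∀ k, coeff u k = coeff v k) : u = v := AddMonoidAlgebra.coeff_injective (Finsupp.ext h)

@[simp] lemma coeff_add (u v : LP) (k : ℤ) : coeff (u + v) k = coeff u k + coeff v k := rfl
@[simp] lemma coeff_zero (k : ℤ) : coeff (0 : LP) k = 0 := rfl
@[simp] lemma coeff_neg (u : LP) (k : ℤ) : coeff (-u) k = - coeff u k := rfl
@[simp] lemma coeff_sub (u v : LP) (k : ℤ) : coeff (u - v) k = coeff u k - coeff v k := rfl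
@[simp] lemma coeff_smul (a : ℂ) (u : LP) (k : ℤ) : coeff (a • u) k = a * coeff u k := rfl

def M (a : ℤ) (r : ℂ) : LP := AddMonoidAlgebra.single a r

@[simp] lemma coeff_M (a : ℤ) (r : ℂ) (k : ℤ) : coeff (M a r) k = if k = a then r else 0 := by
  show (Finsupp.single a r : ℤ →₀ ℂ) k = _
  rw [Finsupp.single_apply]
  simp [eq_comm]

lemma M_mul_M (a b : ℤ) (r s : ℂ) : M a r * M b s = M (a + b) (r * s) :=
  AddMonoidAlgebra.single_mul_single ..

lemma coeff_M_mul (a : ℤ) (r : ℂ) (u : LP) (k : ℤ) :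
    coeff (M a r * u) k = r * coeff u (k - a) := by
  have := AddMonoidAlgebra.coeff_single_mul_apply u r a k
  simpa [M, coeff, neg_add_eq_sub] using this

lemma T_eq (n : ℤ) : (T n : LP) = M n 1 := rfl
lemma C_eq (a : ℂ) : (LaurentPolynomial.C a : LP) = M 0 a := rfl
lemma one_eq : (1 : LP) = M 0 1 := rfl

lemma coeff_hstar (u : LP) (k : ℤ) : coeff (hstar u) k = starRingEnd ℂ (coeff u (-k)) := by
  classical
  have h1 : (Finsupp.mapDomain (fun k : ℤ => -k)
      (Finsupp.mapRange (starRingEnd ℂ) (map_zero _) (AddMonoidAlgebra.coeff u))) k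
      = (Finsupp.mapRange (starRingEnd ℂ) (map_zero _) (AddMonoidAlgebra.coeff u)) (-k) := by
    have : k = (fun k : ℤ => -k) (-k) := by ring
    rw [this, Finsupp.mapDomain_apply (fun a b h => by omega)]
    simp
  simpa [hstar, coeff] using h1

@[simp] lemma hstar_add (u v : LP) : hstar (u + v) = hstar u + hstar v := by
  apply coeff_ext; intro k; simp [coeff_hstar, map_add]

@[simp] lemma hstar_zero : hstar (0 : LP) = 0 := by
  apply coeff_ext; intro k; simp [coeff_hstar]

@[simp] lemma hstar_neg (u : LP) : hstar (-u) = - hstar u := by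
  apply coeff_ext; intro k; simp [coeff_hstar]

@[simp] lemma hstar_M (a : ℤ) (r : ℂ) : hstar (M a r) = M (-a) (starRingEnd ℂ r) := by
  apply coeff_ext; intro k
  simp only [coeff_hstar, coeff_M, neg_eq_iff_eq_neg]
  split <;> simp_all

lemma hstar_smul (a : ℂ) (u : LP) : hstar (a • u) = (starRingEnd ℂ a) • hstar u := by
  apply coeff_ext; intro k; simp [coeff_hstar]

@[simp] lemma hstar_hstar (u : LP) : hstar (hstar u) = u := by
  apply coeff_ext; intro k; simp [coeff_hstar]

lemma hstar_M_mul (a : ℤ) (r : ℂ) (v : LP) :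
    hstar (M a r * v) = M (-a) (starRingEnd ℂ r) * hstar v := by
  apply coeff_ext; intro k
  rw [coeff_hstar, coeff_M_mul, coeff_M_mul, _root_.map_mul, coeff_hstar]
  congr 2
  ring

lemma hstar_mul (u v : LP) : hstar (u * v) = hstar u * hstar v := by
  have H : ∀ f : ℤ →₀ ℂ, hstar ((AddMonoidAlgebra.ofCoeff f : LP) * v) = hstar (AddMonoidAlgebra.ofCoeff f : LP) * hstar v := by
    intro f
    induction f using Finsupp.induction_linear with
    | zero => show hstar ((0 : LP) * v) = hstar (0 : LP) * hstar v; simp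
    | add f g hf hg =>
        show hstar (((AddMonoidAlgebra.ofCoeff f : LP) + (AddMonoidAlgebra.ofCoeff g : LP)) * v)
          = hstar ((AddMonoidAlgebra.ofCoeff f : LP) + (AddMonoidAlgebra.ofCoeff g : LP)) * hstar v
        rw [add_mul, hstar_add, hstar_add, add_mul, hf, hg]
    | single a r =>
        show hstar ((M a r : LP) * v) = hstar (M a r : LP) * hstar v
        rw [hstar_M_mul, hstar_M]
  exact H (AddMonoidAlgebra.coeff u)

@[simp] lemma hstar_one : hstar (1 : LP) = 1 := by
  rw [one_eq, hstar_M]; simp [M]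

lemma hstar_sub (u v : LP) : hstar (u - v) = hstar u - hstar v := by
  simp [sub_eq_add_neg]

-- involution ι : z ↦ z⁻¹ as ring hom
def iot : LP →+* LP := AddMonoidAlgebra.mapDomainRingHom ℂ (negAddMonoidHom (α := ℤ))

lemma coeff_iot (u : LP) (k : ℤ) : coeff (iot u) k = coeff u (-k) := by
  show (Finsupp.mapDomain (negAddMonoidHom (α := ℤ)) (AddMonoidAlgebra.coeff u)) k = _
  have : k = (negAddMonoidHom (α := ℤ)) (-k) := by simp [negAddMonoidHom]
  rw [this, Finsupp.mapDomain_apply (fun a b h => by simpa [negAddMonoidHom] using h)]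
  simp [negAddMonoidHom, coeff]

-- SymT via equation
lemma symT_iff (u : LP) (ε : ℂ) (c : ℤ) : SymT u ε c ↔ u = ε • (M c 1 * iot u) := by
  constructor
  · intro h; apply coeff_ext; intro k
    rw [coeff_smul, coeff_M_mul, coeff_iot, one_mul]
    simpa using h k
  · intro h k
    conv_lhs => rw [h]
    rw [coeff_smul, coeff_M_mul, coeff_iot, one_mul]
    ring_nf

lemma SymT.mul {u v : LP} {ε ε' : ℂ} {c c' : ℤ} (hu : SymT u ε c) (hv : SymT v ε' c') :
    SymT (u * v) (ε * ε') (c + c') := by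
  rw [symT_iff] at hu hv ⊢
  conv_lhs => rw [hu, hv]
  rw [_root_.map_mul]
  rw [smul_mul_assoc, mul_smul_comm, smul_smul]
  congr 1
  rw [← mul_assoc, mul_comm (M c 1) (iot u), mul_assoc (iot u), M_mul_M, one_mul,
    ← mul_assoc, mul_comm (iot u), mul_assoc]

lemma SymT.add {u v : LP} {ε : ℂ} {c : ℤ} (hu : SymT u ε c) (hv : SymT v ε c) :
    SymT (u + v) ε c := by
  intro k; simp only [coeff_add, hu k, hv k]; ring

lemma SymT.neg {u : LP} {ε : ℂ} {c : ℤ} (hu : SymT u ε c) : SymT (-u) ε c := by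
  intro k; simp only [coeff_neg, hu k]; ring

lemma SymT.zero (ε : ℂ) (c : ℤ) : SymT (0 : LP) ε c := by intro k; simp

lemma SymT.hstar {u : LP} {ε : ℂ} {c : ℤ} (hε : Sgn ε) (hu : SymT u ε c) :
    SymT (hstar u) ε (-c) := by
  intro k
  rw [coeff_hstar, coeff_hstar, hu (-k), _root_.map_mul]
  have : (starRingEnd ℂ) ε = ε := by rcases hε with h | h <;> simp [h]
  rw [this]
  congr 2
  ring

lemma Sgn.sq {ε : ℂ} (h : Sgn ε) : ε * ε = 1 := by rcases h with h | h <;> simp [h]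
lemma Sgn.ne0 {ε : ℂ} (h : Sgn ε) : ε ≠ 0 := by rcases h with h | h <;> simp [h]
lemma Sgn.real {ε : ℂ} (h : Sgn ε) : starRingEnd ℂ ε = ε := by rcases h with h | h <;> simp [h]

lemma SymT.one : SymT (1 : LP) 1 0 := by
  rw [symT_iff]; apply coeff_ext; intro k
  rw [one_eq, coeff_smul, coeff_M_mul, coeff_iot]
  simp [one_eq]

lemma SymT.M0 (r : ℂ) : SymT (M 0 r) 1 0 := by
  intro k; simp only [coeff_M]
  by_cases h : k = 0 <;> simp [h, zero_sub, neg_eq_zero]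

def DegLe (u : LP) (d : ℤ) : Prop := ∀ k : ℤ, d < k → coeff u k = 0

lemma coeff_mul_eq (u v : LP) (x : ℤ) :
    coeff (u * v) x = (AddMonoidAlgebra.coeff u).sum fun a r =>
      (AddMonoidAlgebra.coeff v).sum fun b s => if a + b = x then r * s else 0 :=
  AddMonoidAlgebra.coeff_mul _ _ _

lemma mem_supp_le {u : LP} {d : ℤ} (hu : DegLe u d) {a : ℤ}
    (ha : a ∈ (AddMonoidAlgebra.coeff u).support) : a ≤ d := by
  by_contra h
  exact (Finsupp.mem_support_iff.mp ha) (hu a (by omega))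

lemma DegLe.mul {u v : LP} {d e : ℤ} (hu : DegLe u d) (hv : DegLe v e) :
    DegLe (u * v) (d + e) := by
  intro x hx
  rw [coeff_mul_eq]
  unfold Finsupp.sum
  apply Finset.sum_eq_zero
  intro a ha
  apply Finset.sum_eq_zero
  intro b hb
  have h1 := mem_supp_le hu ha
  have h2 := mem_supp_le hv hb
  simp only []
  rw [if_neg (by omega)]

lemma coeff_mul_top {u v : LP} {d e : ℤ} (hu : DegLe u d) (hv : DegLe v e) :
    coeff (u * v) (d + e) = coeff u d * coeff v e := by
  classical
  rw [coeff_mul_eq]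
  unfold Finsupp.sum
  have inner : ∀ a : ℤ, a ∈ (AddMonoidAlgebra.coeff u).support →
      (∑ b ∈ (AddMonoidAlgebra.coeff v).support,
        if a + b = d + e then (AddMonoidAlgebra.coeff u) a * (AddMonoidAlgebra.coeff v) b else 0)
      = if a = d then (AddMonoidAlgebra.coeff u) a * coeff v e else 0 := by
    intro a ha
    have hale : a ≤ d := mem_supp_le hu ha
    by_cases had : a = d
    · subst had
      rw [if_pos rfl]
      have : ∀ b ∈ (AddMonoidAlgebra.coeff v).support,
          (if a + b = a + e then (AddMonoidAlgebra.coeff u) a * (AddMonoidAlgebra.coeff v) b else 0)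
          = if b = e then (AddMonoidAlgebra.coeff u) a * (AddMonoidAlgebra.coeff v) b else 0 := by
        intro b _
        congr 1
        simp only [eq_iff_iff]
        constructor <;> intro h <;> omega
      rw [Finset.sum_congr rfl this, Finset.sum_ite_eq' _ e
        (fun b => (AddMonoidAlgebra.coeff u) a * (AddMonoidAlgebra.coeff v) b)]
      by_cases he : e ∈ (AddMonoidAlgebra.coeff v).support
      · rw [if_pos he]; rfl
      · rw [if_neg he]
        have : coeff v e = 0 := Finsupp.notMem_support_iff.mp he
        rw [this, mul_zero]
    · rw [if_neg had]
      apply Finset.sum_eq_zero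
      intro b hb
      have : b ≤ e := mem_supp_le hv hb
      rw [if_neg (by omega)]
  rw [Finset.sum_congr rfl inner, Finset.sum_ite_eq' _ d
    (fun a => (AddMonoidAlgebra.coeff u) a * coeff v e)]
  by_cases hd : d ∈ (AddMonoidAlgebra.coeff u).support
  · rw [if_pos hd]; rfl
  · rw [if_neg hd]
    have : coeff u d = 0 := Finsupp.notMem_support_iff.mp hd
    rw [this, zero_mul]

lemma coeff_degL_ne {u : LP} (h : u ≠ 0) : coeff u (degL u) ≠ 0 := by
  rw [degL, dif_neg h]
  exact Finsupp.mem_support_iff.mp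
    ((AddMonoidAlgebra.coeff u).support.max'_mem
      (Finsupp.support_nonempty_iff.mpr fun h' => h (AddMonoidAlgebra.coeff_injective h')))

lemma degLe_degL (u : LP) : DegLe u (degL u) := by
  intro k hk
  by_cases h : u = 0
  · rw [h]; rfl
  · rw [degL, dif_neg h] at hk
    by_contra hc
    have := (AddMonoidAlgebra.coeff u).support.le_max' k (Finsupp.mem_support_iff.mpr hc)
    omega

lemma degL_le {u : LP} (h : u ≠ 0) {d : ℤ} (hd : ∀ k, d < k → coeff u k = 0) :
    degL u ≤ d := by
  rw [degL, dif_neg h]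
  apply Finset.max'_le
  intro a ha
  by_contra hc
  exact (Finsupp.mem_support_iff.mp ha) (hd a (by omega))

lemma degL_nonneg {u : LP} (h : u ≠ 0) (hs : SymT u 1 0) : 0 ≤ degL u := by
  by_contra hc
  have h1 : coeff u (-(degL u)) = 0 := degLe_degL u _ (by omega)
  have h2 := hs (degL u)
  rw [one_mul, zero_sub] at h2
  exact coeff_degL_ne h (h2.trans h1)

lemma eq_M_of_deg0 {u : LP} (hs : SymT u 1 0) (h0 : degL u ≤ 0) : u = M 0 (coeff u 0) := by
  apply coeff_ext
  intro k
  rw [coeff_M]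
  by_cases hk : k = 0
  · rw [if_pos hk, hk]
  · rw [if_neg hk]
    rcases lt_or_gt_of_ne hk with h | h
    · rw [hs k, one_mul, zero_sub, degLe_degL u (-k) (by omega)]
    · exact degLe_degL u k (by omega)

def Pat (V : Matrix (Fin 2) (Fin 2) LP) (ε₀ : ℂ) (c₀ : ℤ) : Prop :=
  SymT (V 0 0) 1 0 ∧ SymT (V 1 1) 1 0 ∧ SymT (V 0 1) ε₀ c₀ ∧ SymT (V 1 0) ε₀ (-c₀)

lemma hstarM_apply (A : Matrix (Fin 2) (Fin 2) LP) (i j : Fin 2) :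
    hstarM A i j = hstar (A j i) := rfl

lemma mul_apply2 (X Y : Matrix (Fin 2) (Fin 2) LP) (i j : Fin 2) :
    (X * Y) i j = X i 0 * Y 0 j + X i 1 * Y 1 j := by
  rw [Matrix.mul_apply, Fin.sum_univ_two]

lemma hstarM_mul (X Y : Matrix (Fin 2) (Fin 2) LP) :
    hstarM (X * Y) = hstarM Y * hstarM X := by
  ext i j
  rw [hstarM_apply, mul_apply2, mul_apply2, hstar_add, hstar_mul, hstar_mul]
  rw [hstarM_apply, hstarM_apply, hstarM_apply, hstarM_apply]
  ring

lemma hstarM_hstarM (X : Matrix (Fin 2) (Fin 2) LP) : hstarM (hstarM X) = X := by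
  ext i j
  rw [hstarM_apply, hstarM_apply, hstar_hstar]

lemma det2 (X : Matrix (Fin 2) (Fin 2) LP) : X.det = X 0 0 * X 1 1 - X 0 1 * X 1 0 :=
  Matrix.det_fin_two X

lemma det_hstarM (X : Matrix (Fin 2) (Fin 2) LP) : (hstarM X).det = hstar X.det := by
  rw [det2, det2, hstar_sub, hstar_mul, hstar_mul, hstarM_apply, hstarM_apply,
    hstarM_apply, hstarM_apply]
  ring

lemma C_mul_T_eq (lam : ℂ) (k : ℤ) : (LaurentPolynomial.C lam * T k : LP) = M k lam := by
  rw [C_eq, T_eq, M_mul_M, zero_add, mul_one]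

lemma StrongInv.mul {X Y : Matrix (Fin 2) (Fin 2) LP} (hX : StrongInv X) (hY : StrongInv Y) :
    StrongInv (X * Y) := by
  obtain ⟨l1, k1, h1, e1⟩ := hX
  obtain ⟨l2, k2, h2, e2⟩ := hY
  refine ⟨l1 * l2, k1 + k2, mul_ne_zero h1 h2, ?_⟩
  rw [Matrix.det_mul, e1, e2, C_mul_T_eq, C_mul_T_eq, C_mul_T_eq, M_mul_M]

lemma Pat.mul {X Y : Matrix (Fin 2) (Fin 2) LP} {ε₀ : ℂ} {c₀ : ℤ} (hε : Sgn ε₀)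
    (hX : Pat X ε₀ c₀) (hY : Pat Y ε₀ c₀) : Pat (X * Y) ε₀ c₀ := by
  obtain ⟨x1, x2, x3, x4⟩ := hX
  obtain ⟨y1, y2, y3, y4⟩ := hY
  refine ⟨?_, ?_, ?_, ?_⟩ <;> rw [mul_apply2]
  · have h1 := x1.mul y1
    have h2 := x3.mul y4
    rw [one_mul] at h1
    rw [hε.sq] at h2
    rw [add_neg_cancel] at h2
    exact h1.add h2
  · have h1 := x4.mul y3
    have h2 := x2.mul y2
    rw [one_mul] at h2
    rw [hε.sq, neg_add_cancel] at h1
    exact h1.add h2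
  · have h1 := x1.mul y3
    have h2 := x3.mul y2
    rw [one_mul] at h1
    rw [mul_one, add_zero] at h2
    rw [show (0:ℤ) + c₀ = c₀ by ring] at h1
    exact h1.add h2
  · have h1 := x4.mul y1
    have h2 := x2.mul y4
    rw [mul_one, add_zero] at h1
    rw [one_mul, zero_add] at h2
    exact h1.add h2

def flipM (A : Matrix (Fin 2) (Fin 2) LP) : Matrix (Fin 2) (Fin 2) LP :=
  Matrix.of ![![A 1 1, A 1 0], ![A 0 1, A 0 0]]

lemma ext2 {X Y : Matrix (Fin 2) (Fin 2) LP} (h00 : X 0 0 = Y 0 0) (h01 : X 0 1 = Y 0 1)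
    (h10 : X 1 0 = Y 1 0) (h11 : X 1 1 = Y 1 1) : X = Y := by
  apply Matrix.ext; intro i j; fin_cases i <;> fin_cases j <;> assumption

lemma flipM_apply00 (A : Matrix (Fin 2) (Fin 2) LP) : flipM A 0 0 = A 1 1 := rfl
lemma flipM_apply01 (A : Matrix (Fin 2) (Fin 2) LP) : flipM A 0 1 = A 1 0 := rfl
lemma flipM_apply10 (A : Matrix (Fin 2) (Fin 2) LP) : flipM A 1 0 = A 0 1 := rfl
lemma flipM_apply11 (A : Matrix (Fin 2) (Fin 2) LP) : flipM A 1 1 = A 0 0 := rfl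

lemma flipM_mul (X Y : Matrix (Fin 2) (Fin 2) LP) :
    flipM (X * Y) = flipM X * flipM Y := by
  apply ext2 <;>
    simp only [flipM_apply00, flipM_apply01, flipM_apply10, flipM_apply11, mul_apply2] <;>
    ring

lemma flipM_hstarM (X : Matrix (Fin 2) (Fin 2) LP) : flipM (hstarM X) = hstarM (flipM X) := by
  apply ext2 <;> rfl

lemma flipM_det (X : Matrix (Fin 2) (Fin 2) LP) : (flipM X).det = X.det := by
  rw [det2, det2, flipM_apply00, flipM_apply01, flipM_apply10, flipM_apply11]
  ring

lemma flipM_herm {A : Matrix (Fin 2) (Fin 2) LP} (h : IsHerm A) : IsHerm (flipM A) := by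
  rw [IsHerm, ← flipM_hstarM, h]

lemma flipM_flipM (A : Matrix (Fin 2) (Fin 2) LP) : flipM (flipM A) = A := by
  apply ext2 <;> rfl

lemma flipM_pat {A : Matrix (Fin 2) (Fin 2) LP} {ε₀ : ℂ} {c₀ : ℤ} (h : Pat A ε₀ c₀) :
    Pat (flipM A) ε₀ (-c₀) := by
  obtain ⟨h1, h2, h3, h4⟩ := h
  exact ⟨h2, h1, h4, by rw [flipM_apply10, neg_neg]; exact h3⟩

def Concl (A : Matrix (Fin 2) (Fin 2) LP) (ε₀ : ℂ) (c₀ : ℤ) : Prop :=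
  ∃ V : Matrix (Fin 2) (Fin 2) LP, StrongInv V ∧ Pat V ε₀ c₀ ∧
    ∃ i j, (V * A * hstarM V) i j = 0

lemma StrongInv.one : StrongInv (1 : Matrix (Fin 2) (Fin 2) LP) := by
  refine ⟨1, 0, one_ne_zero, ?_⟩
  rw [Matrix.det_one, C_mul_T_eq]
  apply coeff_ext; intro k
  rw [one_eq]

lemma hstarM_one : hstarM (1 : Matrix (Fin 2) (Fin 2) LP) = 1 := by
  apply ext2 <;> show hstar _ = _
  · rw [show (1 : Matrix (Fin 2) (Fin 2) LP) 0 0 = 1 from rfl, hstar_one]; try rfl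
  · rw [show (1 : Matrix (Fin 2) (Fin 2) LP) 1 0 = 0 from rfl, hstar_zero]; try rfl
  · rw [show (1 : Matrix (Fin 2) (Fin 2) LP) 0 1 = 0 from rfl, hstar_zero]; try rfl
  · rw [show (1 : Matrix (Fin 2) (Fin 2) LP) 1 1 = 1 from rfl, hstar_one]; try rfl

lemma Pat.one (ε₀ : ℂ) (c₀ : ℤ) : Pat (1 : Matrix (Fin 2) (Fin 2) LP) ε₀ c₀ := by
  refine ⟨?_, ?_, ?_, ?_⟩
  · exact SymT.one
  · exact SymT.one
  · exact SymT.zero ε₀ c₀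
  · exact SymT.zero ε₀ (-c₀)

lemma concl_of_entry {A : Matrix (Fin 2) (Fin 2) LP} {ε₀ : ℂ} {c₀ : ℤ}
    (i j : Fin 2) (h : A i j = 0) : Concl A ε₀ c₀ := by
  refine ⟨1, StrongInv.one, Pat.one ε₀ c₀, i, j, ?_⟩
  rw [hstarM_one, mul_one, one_mul, h]

lemma concl_conj {A E : Matrix (Fin 2) (Fin 2) LP} {ε₀ : ℂ} {c₀ : ℤ} (hε : Sgn ε₀)
    (hP : Pat E ε₀ c₀) (hS : StrongInv E) (h : Concl (E * A * hstarM E) ε₀ c₀) :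
    Concl A ε₀ c₀ := by
  obtain ⟨V, hSV, hPV, i, j, hz⟩ := h
  refine ⟨V * E, hSV.mul hS, hPV.mul hε hP, i, j, ?_⟩
  have : V * E * A * hstarM (V * E) = V * (E * A * hstarM E) * hstarM V := by
    rw [hstarM_mul]
    noncomm_ring
  rw [this]
  exact hz

lemma concl_flip {A : Matrix (Fin 2) (Fin 2) LP} {ε₀ : ℂ} {c₀ : ℤ}
    (h : Concl (flipM A) ε₀ (-c₀)) : Concl A ε₀ c₀ := by
  obtain ⟨V, hSV, hPV, i, j, hz⟩ := h
  obtain ⟨l, k, hl, hdV⟩ := hSV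
  refine ⟨flipM V, ⟨l, k, hl, by rw [flipM_det]; exact hdV⟩, ?_, ?_⟩
  · have := flipM_pat hPV
    rw [neg_neg] at this
    exact this
  · have key : flipM V * A * hstarM (flipM V) = flipM (V * flipM A * hstarM V) := by
      rw [flipM_mul, flipM_mul, flipM_hstarM, flipM_flipM]
    rw [key]
    fin_cases i <;> fin_cases j
    · exact ⟨1, 1, by rw [flipM_apply11]; exact hz⟩
    · exact ⟨1, 0, by rw [flipM_apply10]; exact hz⟩
    · exact ⟨0, 1, by rw [flipM_apply01]; exact hz⟩
    · exact ⟨0, 0, by rw [flipM_apply00]; exact hz⟩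

lemma herm00 {A : Matrix (Fin 2) (Fin 2) LP} (h : IsHerm A) : hstar (A 0 0) = A 0 0 :=
  congrFun (congrFun h 0) 0
lemma herm11 {A : Matrix (Fin 2) (Fin 2) LP} (h : IsHerm A) : hstar (A 1 1) = A 1 1 :=
  congrFun (congrFun h 1) 1
lemma herm01 {A : Matrix (Fin 2) (Fin 2) LP} (h : IsHerm A) : hstar (A 1 0) = A 0 1 :=
  congrFun (congrFun h 0) 1
lemma herm10 {A : Matrix (Fin 2) (Fin 2) LP} (h : IsHerm A) : hstar (A 0 1) = A 1 0 :=
  congrFun (congrFun h 1) 0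

/-- Base case: `A 0 0` is a nonzero constant. -/
lemma concl_base {A : Matrix (Fin 2) (Fin 2) LP} {ε₀ : ℂ} {c₀ : ℤ}
    (hH : IsHerm A) (hP : Pat A ε₀ c₀) (h00 : A 0 0 ≠ 0) (hdeg : degL (A 0 0) ≤ 0) :
    Concl A ε₀ c₀ := by
  set a := coeff (A 0 0) 0 with ha
  have hM : A 0 0 = M 0 a := eq_M_of_deg0 hP.1 hdeg
  have hane : a ≠ 0 := by
    intro h
    apply h00
    rw [hM, h]
    apply coeff_ext; intro k; simp
  set V : Matrix (Fin 2) (Fin 2) LP := Matrix.of ![![1, 0], ![-(A 1 0), A 0 0]] with hV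
  have hV00 : V 0 0 = 1 := rfl
  have hV01 : V 0 1 = 0 := rfl
  have hV10 : V 1 0 = -(A 1 0) := rfl
  have hV11 : V 1 1 = A 0 0 := rfl
  refine ⟨V, ⟨a, 0, hane, ?_⟩, ⟨?_, ?_, ?_, ?_⟩, 0, 1, ?_⟩
  · rw [det2, hV00, hV01, hV11, one_mul, zero_mul, sub_zero, hM, C_mul_T_eq]
  · rw [hV00]; exact SymT.one
  · rw [hV11]; exact hP.1
  · rw [hV01]; exact SymT.zero ε₀ c₀
  · rw [hV10]; exact (hP.2.2.2).neg
  · rw [mul_apply2, mul_apply2, mul_apply2, hstarM_apply, hstarM_apply, hV00, hV01,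
      hV10, hV11, hstar_neg, herm01 hH, herm00 hH]
    ring

lemma Meq {a b : ℤ} {r u : ℂ} (h1 : a = b) (h2 : r = u) : M a r = M b u := by rw [h1, h2]

lemma SymT_pair {ε₀ : ℂ} (hε : Sgn ε₀) (g c₀ : ℤ) (s : ℂ) :
    SymT (M g s + M (c₀ - g) (ε₀ * s)) ε₀ c₀ := by
  intro k
  simp only [coeff_add, coeff_M]
  have e1 : (c₀ - k = g) = (k = c₀ - g) := by simp only [eq_iff_iff]; omega
  have e2 : (c₀ - k = c₀ - g) = (k = g) := by simp only [eq_iff_iff]; omega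
  simp only [e1, e2, mul_add, mul_ite, mul_zero, ← mul_assoc, hε.sq, one_mul]
  ring

lemma hstar_pair {ε₀ : ℂ} (hε : Sgn ε₀) (g c₀ : ℤ) (s : ℂ) :
    hstar (M g s + M (c₀ - g) (ε₀ * s))
      = M (-g) (starRingEnd ℂ s) + M (-(c₀ - g)) (ε₀ * starRingEnd ℂ s) := by
  rw [hstar_add, hstar_M, hstar_M, _root_.map_mul, hε.real]

lemma coeff_expr {ε₀ : ℂ} (hε : Sgn ε₀) (g c₀ : ℤ) (s : ℂ) (u v w x : LP) (k : ℤ) :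
    coeff (u + (M g s + M (c₀ - g) (ε₀ * s)) * v
      + hstar (M g s + M (c₀ - g) (ε₀ * s)) * w
      + (M g s + M (c₀ - g) (ε₀ * s)) * hstar (M g s + M (c₀ - g) (ε₀ * s)) * x) k
    = coeff u k + (s * coeff v (k - g) + ε₀ * s * coeff v (k - c₀ + g))
      + (starRingEnd ℂ s * coeff w (k + g) + ε₀ * starRingEnd ℂ s * coeff w (k + c₀ - g))
      + ((s * starRingEnd ℂ s) * (coeff x k + coeff x k)
        + ε₀ * (s * starRingEnd ℂ s) * (coeff x (k - 2*g + c₀) + coeff x (k + 2*g - c₀))) := by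
  have hee : (M g s + M (c₀ - g) (ε₀ * s))
      * (M (-g) (starRingEnd ℂ s) + M (-(c₀ - g)) (ε₀ * starRingEnd ℂ s))
      = (M 0 (s * starRingEnd ℂ s) + M (2*g - c₀) (ε₀ * (s * starRingEnd ℂ s)))
        + (M (c₀ - 2*g) (ε₀ * (s * starRingEnd ℂ s)) + M 0 (s * starRingEnd ℂ s)) := by
    rw [add_mul, mul_add, mul_add, M_mul_M, M_mul_M, M_mul_M, M_mul_M]
    refine congrArg₂ (· + ·) (congrArg₂ (· + ·) (Meq (by ring) (by ring)) (Meq (by ring) (by ring)))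
      (congrArg₂ (· + ·) (Meq (by ring) (by ring)) (Meq (by ring) ?_))
    rw [mul_mul_mul_comm, hε.sq, one_mul]
  rw [hstar_pair hε, hee]
  simp only [coeff_add, add_mul, coeff_M_mul]
  have a1 : k - (c₀ - g) = k - c₀ + g := by ring
  have a2 : k - -g = k + g := by ring
  have a3 : k - -(c₀ - g) = k + c₀ - g := by ring
  have a4 : k - (0:ℤ) = k := by ring
  have a5 : k - (2*g - c₀) = k - 2*g + c₀ := by ring
  have a6 : k - (c₀ - 2*g) = k + 2*g - c₀ := by ring
  rw [a1, a2, a3, a4, a5, a6]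
  ring

lemma reduce {A : Matrix (Fin 2) (Fin 2) LP} {ε₀ : ℂ} {c₀ : ℤ} (hH : IsHerm A) (hε : Sgn ε₀)
    (hcase : Odd c₀ ∨ (ε₀ = 1 ∧ Even c₀)) (hP : Pat A ε₀ c₀) (Cst : ℝ)
    (hdet : A.det = LaurentPolynomial.C (Cst : ℂ))
    (h00 : A 0 0 ≠ 0) (h01 : A 0 1 ≠ 0) (h11 : A 1 1 ≠ 0)
    (hnm : degL (A 1 1) ≤ degL (A 0 0)) (hm1 : 1 ≤ degL (A 0 0)) :
    ∃ e : LP, SymT e ε₀ c₀ ∧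
      ∀ k : ℤ, degL (A 0 0) ≤ k →
        coeff (A 0 0 + e * A 1 0 + hstar e * A 0 1 + e * hstar e * A 1 1) k = 0 := by
  set m := degL (A 0 0) with hm
  set n := degL (A 1 1) with hn
  set q := degL (A 0 1) with hq
  set a := coeff (A 0 0) m with ha
  set b := coeff (A 1 1) n with hb
  set t := coeff (A 0 1) q with ht
  have hane : a ≠ 0 := coeff_degL_ne h00
  have hbne : b ≠ 0 := coeff_degL_ne h11
  have htne : t ≠ 0 := coeff_degL_ne h01
  have hn0 : 0 ≤ n := degL_nonneg h11 hP.2.1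
  have D00 : DegLe (A 0 0) m := degLe_degL _
  have D11 : DegLe (A 1 1) n := degLe_degL _
  have D01 : DegLe (A 0 1) q := degLe_degL _
  have h10eq : A 1 0 = hstar (A 0 1) := (herm10 hH).symm
  have hsym01 : ∀ k, coeff (A 0 1) k = ε₀ * coeff (A 0 1) (c₀ - k) := hP.2.2.1
  have D10 : DegLe (A 1 0) (q - c₀) := by
    intro k hk
    rw [h10eq, coeff_hstar, hsym01 (-k)]
    have e1 : c₀ - -k = c₀ + k := by ring
    rw [e1, D01 (c₀ + k) (by omega), mul_zero, map_zero]
  have c10 : coeff (A 1 0) (q - c₀) = ε₀ * starRingEnd ℂ t := by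
    rw [h10eq, coeff_hstar]
    have e1 : -(q - c₀) = c₀ - q := by ring
    rw [e1, hsym01 (c₀ - q)]
    have e2 : c₀ - (c₀ - q) = q := by ring
    rw [e2, _root_.map_mul, hε.real]
  -- determinant coefficient comparison
  have hdet2 : A 0 0 * A 1 1 - A 0 1 * A 1 0 = M 0 ((Cst : ℂ)) := by
    rw [← det2, hdet, C_eq]
  have hco : ∀ k : ℤ, k ≠ 0 → coeff (A 0 0 * A 1 1) k = coeff (A 0 1 * A 1 0) k := by
    intro k hk
    have := congrArg (fun u => coeff u k) hdet2
    simp only [coeff_sub, coeff_M, if_neg hk] at this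
    linear_combination this
  have htop1 : coeff (A 0 0 * A 1 1) (m + n) = a * b := coeff_mul_top D00 D11
  have htop2 : coeff (A 0 1 * A 1 0) (q + (q - c₀)) = t * (ε₀ * starRingEnd ℂ t) := by
    rw [coeff_mul_top D01 D10, c10]
  have htne' : t * (ε₀ * starRingEnd ℂ t) ≠ 0 := by
    apply mul_ne_zero htne
    apply mul_ne_zero hε.ne0
    simpa using htne
  have hL : q + (q - c₀) = m + n := by
    rcases lt_trichotomy (q + (q - c₀)) (m + n) with h | h | h
    · exfalso
      have h1 := hco (m + n) (by omega)
      rw [htop1, DegLe.mul D01 D10 (m + n) (by omega)] at h1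
      exact mul_ne_zero hane hbne h1
    · exact h
    · exfalso
      have h1 := hco (q + (q - c₀)) (by omega)
      rw [htop2, DegLe.mul D00 D11 _ (by omega)] at h1
      exact htne' h1.symm
  have hab : a * b = t * (ε₀ * starRingEnd ℂ t) := by
    have h1 := hco (m + n) (by omega)
    rw [htop1, ← hL, htop2] at h1
    exact h1
  have breal : starRingEnd ℂ b = b := by
    have h1 : coeff (A 1 1) (-n) = coeff (A 1 1) n := by
      have := hP.2.1 (-n)
      rw [one_mul] at this
      rw [this]
      congr 1
      ring
    have h2 : coeff (hstar (A 1 1)) n = starRingEnd ℂ (coeff (A 1 1) (-n)) := coeff_hstar _ _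
    rw [herm11 hH, h1] at h2
    rw [← hb] at h2
    rw [← h2]
  set g := m + (c₀ - q) with hg
  -- uniform high-coefficient vanishing
  have hbig : ∀ s : ℂ, ∀ k : ℤ, m < k →
      coeff (A 0 0 + (M g s + M (c₀ - g) (ε₀ * s)) * A 1 0
        + hstar (M g s + M (c₀ - g) (ε₀ * s)) * A 0 1
        + (M g s + M (c₀ - g) (ε₀ * s)) * hstar (M g s + M (c₀ - g) (ε₀ * s)) * A 1 1) k
        = 0 := by
    intro s k hk
    rw [coeff_expr hε]
    rw [D00 k (by omega)]
    rw [D10 (k - g) (by omega), D10 (k - c₀ + g) (by omega)]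
    rw [D01 (k + g) (by omega), D01 (k + c₀ - g) (by omega)]
    rw [D11 k (by omega), D11 (k - 2*g + c₀) (by omega), D11 (k + 2*g - c₀) (by omega)]
    ring
  rcases eq_or_lt_of_le hnm with hmn | hmn
  · -- n = m : use a single (doubled) term with ε₀ = 1
    have hε1 : ε₀ = 1 := by
      rcases hcase with hodd | ⟨h1, _⟩
      · exfalso
        obtain ⟨r, hr⟩ := hodd
        omega
      · exact h1
    set s : ℂ := -t / (2 * b) with hs
    refine ⟨M g s + M (c₀ - g) (ε₀ * s), SymT_pair hε g c₀ s, ?_⟩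
    intro k hk
    rcases eq_or_lt_of_le hk with hk' | hk'
    · -- k = m
      have hkm : k = m := hk'.symm
      subst hkm
      rw [coeff_expr hε]
      have v1 : coeff (A 1 0) (m - g) = ε₀ * starRingEnd ℂ t := by
        rw [← c10]; congr 1; omega
      have v2 : coeff (A 1 0) (m - c₀ + g) = ε₀ * starRingEnd ℂ t := by
        rw [← c10]; congr 1; omega
      have v3 : coeff (A 0 1) (m + g) = t := by
        rw [ht]; congr 1; omega
      have v4 : coeff (A 0 1) (m + c₀ - g) = t := by
        rw [ht]; congr 1; omega
      have v5 : coeff (A 1 1) m = b := by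
        rw [hb]; congr 1; omega
      have v6 : coeff (A 1 1) (m - 2*g + c₀) = b := by
        rw [hb]; congr 1; omega
      have v7 : coeff (A 1 1) (m + 2*g - c₀) = b := by
        rw [hb]; congr 1; omega
      rw [v1, v2, v3, v4, v5, v6, v7, ← ha]
      have hsbar : starRingEnd ℂ s = -(starRingEnd ℂ t) / (2 * b) := by
        rw [hs, map_div₀, map_neg, _root_.map_mul, breal, map_ofNat]
      rw [hsbar, hs, hε1]
      rw [hε1] at hab
      field_simp
      linear_combination (4 : ℂ) * hab
    · exact hbig s k hk'
  · -- n < m : two-term e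
    set s : ℂ := -t / b with hs
    refine ⟨M g s + M (c₀ - g) (ε₀ * s), SymT_pair hε g c₀ s, ?_⟩
    intro k hk
    rcases eq_or_lt_of_le hk with hk' | hk'
    · have hkm : k = m := hk'.symm
      subst hkm
      rw [coeff_expr hε]
      have v1 : coeff (A 1 0) (m - g) = ε₀ * starRingEnd ℂ t := by
        rw [← c10]; congr 1; omega
      rw [v1]
      rw [D10 (m - c₀ + g) (by omega)]
      rw [D01 (m + g) (by omega)]
      have v4 : coeff (A 0 1) (m + c₀ - g) = t := by
        rw [ht]; congr 1; omega
      rw [v4]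
      rw [D11 m (by omega)]
      have v6 : coeff (A 1 1) (m - 2*g + c₀) = b := by
        rw [hb]; congr 1; omega
      rw [v6]
      rw [D11 (m + 2*g - c₀) (by omega)]
      rw [← ha]
      have hsbar : starRingEnd ℂ s = -(starRingEnd ℂ t) / b := by
        rw [hs, map_div₀, map_neg, breal]
      rw [hsbar, hs]
      field_simp
      linear_combination b * hab
    · exact hbig s k hk'

def mes (A : Matrix (Fin 2) (Fin 2) LP) : ℕ :=
  (degL (A 0 0)).toNat + (degL (A 1 1)).toNat

lemma degL_zero : degL (0 : LP) = 0 := by rw [degL, dif_pos rfl]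

lemma hstar_ne {u : LP} (h : u ≠ 0) : hstar u ≠ 0 := by
  intro hc
  apply h
  rw [← hstar_hstar u, hc, hstar_zero]

lemma Pat.hstarM {X : Matrix (Fin 2) (Fin 2) LP} {ε₀ : ℂ} {c₀ : ℤ} (hε : Sgn ε₀)
    (h : Pat X ε₀ c₀) : Pat (QT.hstarM X) ε₀ c₀ := by
  obtain ⟨h1, h2, h3, h4⟩ := h
  refine ⟨?_, ?_, ?_, ?_⟩
  · show SymT (hstar (X 0 0)) 1 0
    have := h1.hstar (Or.inl rfl)
    rwa [neg_zero] at this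
  · show SymT (hstar (X 1 1)) 1 0
    have := h2.hstar (Or.inl rfl)
    rwa [neg_zero] at this
  · show SymT (hstar (X 1 0)) ε₀ c₀
    have := h4.hstar hε
    rwa [neg_neg] at this
  · exact h3.hstar hε

lemma do_step {N : ℕ}
    (ih : ∀ M', M' < N → ∀ (A : Matrix (Fin 2) (Fin 2) LP) (ε₀ : ℂ) (c₀ : ℤ) (Cst : ℝ),
      IsHerm A → Sgn ε₀ → (Odd c₀ ∨ (ε₀ = 1 ∧ Even c₀)) → Pat A ε₀ c₀ →
      A.det = LaurentPolynomial.C (Cst : ℂ) → mes A = M' → Concl A ε₀ c₀)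
    {A : Matrix (Fin 2) (Fin 2) LP} {ε₀ : ℂ} {c₀ : ℤ} {Cst : ℝ}
    (hH : IsHerm A) (hε : Sgn ε₀) (hcase : Odd c₀ ∨ (ε₀ = 1 ∧ Even c₀)) (hP : Pat A ε₀ c₀)
    (hdet : A.det = LaurentPolynomial.C (Cst : ℂ))
    (h00 : A 0 0 ≠ 0) (h01 : A 0 1 ≠ 0) (h11 : A 1 1 ≠ 0)
    (hle : degL (A 1 1) ≤ degL (A 0 0)) (hm1 : 1 ≤ degL (A 0 0))
    (hmes : mes A = N) : Concl A ε₀ c₀ := by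
  obtain ⟨e, hsym, hvan⟩ := reduce hH hε hcase hP Cst hdet h00 h01 h11 hle hm1
  set E : Matrix (Fin 2) (Fin 2) LP := Matrix.of ![![1, e], ![0, 1]] with hE
  have e00 : E 0 0 = 1 := rfl
  have e01 : E 0 1 = e := rfl
  have e10 : E 1 0 = 0 := rfl
  have e11 : E 1 1 = 1 := rfl
  have s00 : hstarM E 0 0 = 1 := by show hstar (E 0 0) = 1; rw [e00, hstar_one]
  have s01 : hstarM E 0 1 = 0 := by show hstar (E 1 0) = 0; rw [e10, hstar_zero]
  have s10 : hstarM E 1 0 = hstar e := by show hstar (E 0 1) = hstar e; rw [e01]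
  have s11 : hstarM E 1 1 = 1 := by show hstar (E 1 1) = 1; rw [e11, hstar_one]
  have hPatE : Pat E ε₀ c₀ := by
    refine ⟨?_, ?_, ?_, ?_⟩
    · rw [e00]; exact SymT.one
    · rw [e11]; exact SymT.one
    · rw [e01]; exact hsym
    · rw [e10]; exact SymT.zero ε₀ (-c₀)
  have hdetE : E.det = 1 := by
    rw [det2, e00, e01, e10, e11]; ring
  have hSIE : StrongInv E := ⟨1, 0, one_ne_zero, by rw [hdetE, C_mul_T_eq]; exact one_eq⟩
  set A' := E * A * hstarM E with hA'
  have h00' : A' 0 0 = A 0 0 + e * A 1 0 + hstar e * A 0 1 + e * hstar e * A 1 1 := by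
    rw [hA', mul_apply2, mul_apply2, mul_apply2, e00, e01, s00, s10]
    ring
  have h11' : A' 1 1 = A 1 1 := by
    rw [hA', mul_apply2, mul_apply2, mul_apply2, e10, e11, s01, s11]
    ring
  have hH' : IsHerm A' := by
    show QT.hstarM (E * A * hstarM E) = E * A * hstarM E
    rw [hstarM_mul, hstarM_mul, hstarM_hstarM, hH, Matrix.mul_assoc]
  have hP' : Pat A' ε₀ c₀ := (hPatE.mul hε hP).mul hε (Pat.hstarM hε hPatE)
  have hdet' : A'.det = LaurentPolynomial.C (Cst : ℂ) := by
    rw [hA', Matrix.det_mul, Matrix.det_mul, det_hstarM, hdetE, hstar_one, one_mul, mul_one, hdet]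
  have hmes' : mes A' < N := by
    have hlt : (degL (A' 0 0)).toNat < (degL (A 0 0)).toNat := by
      by_cases hz : A' 0 0 = 0
      · rw [hz, degL_zero]
        omega
      · have h2 : degL (A' 0 0) ≤ degL (A 0 0) - 1 := by
          apply degL_le hz
          intro k hk
          rw [h00']
          exact hvan k (by omega)
        omega
    have : mes A' = (degL (A' 0 0)).toNat + (degL (A 1 1)).toNat := by
      rw [mes, h11']
    rw [this]
    rw [mes] at hmes
    omega
  exact concl_conj hε hPatE hSIE
    (ih (mes A') hmes' A' ε₀ c₀ Cst hH' hε hcase hP' hdet' rfl)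

lemma main (N : ℕ) : ∀ (A : Matrix (Fin 2) (Fin 2) LP) (ε₀ : ℂ) (c₀ : ℤ) (Cst : ℝ),
    IsHerm A → Sgn ε₀ → (Odd c₀ ∨ (ε₀ = 1 ∧ Even c₀)) → Pat A ε₀ c₀ →
    A.det = LaurentPolynomial.C (Cst : ℂ) → mes A = N → Concl A ε₀ c₀ := by
  induction N using Nat.strong_induction_on with
  | _ N ih =>
  intro A ε₀ c₀ Cst hH hε hcase hP hdet hmes
  by_cases h00 : A 0 0 = 0
  · exact concl_of_entry 0 0 h00
  by_cases h01 : A 0 1 = 0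
  · exact concl_of_entry 0 1 h01
  by_cases h11 : A 1 1 = 0
  · exact concl_of_entry 1 1 h11
  rcases le_or_gt (degL (A 1 1)) (degL (A 0 0)) with hle | hlt
  · by_cases hm0 : degL (A 0 0) ≤ 0
    · exact concl_base hH hP h00 hm0
    · exact do_step ih hH hε hcase hP hdet h00 h01 h11 hle (by omega) hmes
  · -- flip
    apply concl_flip
    have hcasef : Odd (-c₀) ∨ (ε₀ = 1 ∧ Even (-c₀)) := by
      rcases hcase with ⟨r, hr⟩ | ⟨h1, r, hr⟩
      · exact Or.inl ⟨-r - 1, by omega⟩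
      · exact Or.inr ⟨h1, ⟨-r, by omega⟩⟩
    have hf00 : flipM A 0 0 ≠ 0 := h11
    have hf01 : flipM A 0 1 ≠ 0 := by
      show A 1 0 ≠ 0
      rw [(herm10 hH).symm]
      exact hstar_ne h01
    have hf11 : flipM A 1 1 ≠ 0 := h00
    have hm00 : 0 ≤ degL (A 0 0) := degL_nonneg h00 hP.1
    have hlef : degL (flipM A 1 1) ≤ degL (flipM A 0 0) := by
      show degL (A 0 0) ≤ degL (A 1 1)
      omega
    have hm1f : 1 ≤ degL (flipM A 0 0) := by
      show 1 ≤ degL (A 1 1)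
      omega
    have hmesf : mes (flipM A) = N := by
      rw [mes] at hmes ⊢
      rw [flipM_apply00, flipM_apply11]
      omega
    exact do_step ih (flipM_herm hH) hε hcasef (flipM_pat hP)
      (by rw [flipM_det]; exact hdet) hf00 hf01 hf11 hlef hm1f hmesf

/-- producing a zero entry via strongly invertible symmetric conjugation
(Lemma 3.6 of the paper). -/
theorem zero_entry_via_strongly_invertible_conjugation
    (A : Matrix (Fin 2) (Fin 2) LP) (hH : IsHerm A)
    (ε₀ : ℂ) (c₀ : ℤ) (hε₀ : Sgn ε₀)
    (hcase : Odd c₀ ∨ (ε₀ = 1 ∧ Even c₀))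
    (h11 : SymT (A 0 0) 1 0) (h22 : SymT (A 1 1) 1 0)
    (h12 : SymT (A 0 1) ε₀ c₀) (h21 : SymT (A 1 0) ε₀ (-c₀))
    (Cst : ℝ) (hC : Cst < 0) (hdet : A.det = LaurentPolynomial.C (Cst : ℂ)) :
    ∃ V : Matrix (Fin 2) (Fin 2) LP, StrongInv V ∧
      SymT (V 0 0) 1 0 ∧ SymT (V 1 1) 1 0 ∧
      SymT (V 0 1) ε₀ c₀ ∧ SymT (V 1 0) ε₀ (-c₀) ∧
      ∃ i j, (V * A * hstarM V) i j = 0 := by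
  have hP : Pat A ε₀ c₀ := ⟨h11, h22, h12, h21⟩
  obtain ⟨V, hS, ⟨p1, p2, p3, p4⟩, i, j, hz⟩ :=
    main (mes A) A ε₀ c₀ Cst hH hε₀ hcase hP hdet rfl
  exact ⟨V, hS, p1, p2, p3, p4, i, j, hz⟩

end QT
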